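/- Let β∖γ be a rook strip and α a partition of n. For x ∈ Sₙ, the filling of β∖γ corresponding to x (via the bijection π) is an LR-filling if and only if the α-recording tableau of x is a standard Young tableau of shape α. -/

import Mathlib

open Equiv

/-! ### Permutations: adjacent transpositions, Coxeter length, Bruhat order -/

/-- `s` is an adjacent transposition `(i, i+1)` in `S_n` (values `0`-indexed). -/
def IsAdjTrans {n : ℕ} (s : Perm (Fin n)) : Prop :=
  ∃ (i : ℕ) (h : i + 1 < n), s = Equiv.swap ⟨i, Nat.lt_of_succ_lt h⟩ ⟨i + 1, h⟩

/-- Coxeter length: the minimal number of adjacent transpositions in a factorization. -/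
noncomputable def permLength {n : ℕ} (x : Perm (Fin n)) : ℕ :=
  sInf {k | ∃ l : List (Perm (Fin n)), l.length = k ∧ (∀ s ∈ l, IsAdjTrans s) ∧ l.prod = x}

/-- Strict Bruhat order: generated by `u < t * u` for transpositions `t`
increasing the length. -/
def BruhatLT {n : ℕ} (x z : Perm (Fin n)) : Prop :=
  Relation.TransGen
    (fun u v => ∃ t : Perm (Fin n), t.IsSwap ∧ v = t * u ∧ permLength u < permLength v) x z

/-- Bruhat order (reflexive version). -/
def BruhatLE {n : ℕ} (x z : Perm (Fin n)) : Prop := x = z ∨ BruhatLT x z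

/-! ### Partitions -/

/-- A partition: an antitone, finitely supported function `ℕ → ℕ`
(the part `αᵢ` of the paper is `f (i-1)`; rows are `0`-indexed). -/
structure Partn where
  f : ℕ → ℕ
  antitone' : Antitone f
  finite_supp : ∃ N, ∀ i, N ≤ i → f i = 0

/-- `p` is a partition of `n`. -/
def PartnOf (p : Partn) (n : ℕ) : Prop :=
  ∃ N, (∀ i, N ≤ i → p.f i = 0) ∧ ∑ i ∈ Finset.range N, p.f i = n

/-- The partial sum `α₁ + ⋯ + α_j` of the first `j` parts. -/
def psum (p : Partn) (j : ℕ) : ℕ := ∑ i ∈ Finset.range j, p.f i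

/-- The set of block boundaries `α₁, α₁+α₂, …` (`1`-indexed positions). -/
def Bdry (p : Partn) : Set ℕ := {m | ∃ j, 1 ≤ j ∧ m = psum p j}

/-- `S^α`: permutations whose values within each block of `α` occur in increasing
order of position.  Values are `0`-indexed: value `v` is the paper's value `v+1`,
and `v`, `v+1` lie in the same block iff `v+1 ∉ Bdry α`. -/
def SAset (α : Partn) {n : ℕ} (x : Perm (Fin n)) : Prop :=
  ∀ (v : ℕ) (h : v + 1 < n), (v + 1) ∉ Bdry α →
    x⁻¹ ⟨v, Nat.lt_of_succ_lt h⟩ < x⁻¹ ⟨v + 1, h⟩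

/-- Containment of partitions. -/
def PartnSub (γ β : Partn) : Prop := ∀ i, γ.f i ≤ β.f i

/-- The transpose (conjugate) partition: `β'_j = #{i : βᵢ ≥ j}` (columns `0`-indexed). -/
noncomputable def ptranspose (p : Partn) (j : ℕ) : ℕ := Set.ncard {i | j < p.f i}

/-- `β∖γ` is a vertical strip: `βᵢ ≤ γᵢ + 1` for all `i`. -/
def VertStrip (β γ : Partn) : Prop := ∀ i, β.f i ≤ γ.f i + 1

/-- `β∖γ` is a horizontal strip: `β'∖γ'` is a vertical strip. -/
def HorizStrip (β γ : Partn) : Prop := ∀ j, ptranspose β j ≤ ptranspose γ j + 1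

/-- A rook strip is a horizontal and vertical strip. -/
def RookStrip (β γ : Partn) : Prop := VertStrip β γ ∧ HorizStrip β γ

/-- The boxes of the skew diagram `β∖γ` (row, column), `0`-indexed. -/
def SkewCells (β γ : Partn) : Set (ℕ × ℕ) := {c | γ.f c.1 ≤ c.2 ∧ c.2 < β.f c.1}

/-! ### Fillings of skew diagrams -/

/-- A filling of the skew diagram `β∖γ` with content `α`: each box gets an entry
`≥ 1`, and there are `α_u` entries equal to `u` (the paper's `αᵤ` is `α.f (u-1)`). -/
structure SkFilling (α β γ : Partn) where
  entry : ℕ × ℕ → ℕ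
  zero_outside : ∀ c, c ∉ SkewCells β γ → entry c = 0
  pos_inside : ∀ c ∈ SkewCells β γ, 1 ≤ entry c
  content : ∀ u : ℕ, 1 ≤ u → Set.ncard {c ∈ SkewCells β γ | entry c = u} = α.f (u - 1)

/-- The Littlewood–Richardson conditions: rows weakly increase, columns strictly
increase, and the lattice permutation property holds. -/
def IsLRF {α β γ : Partn} (F : SkFilling α β γ) : Prop :=
  (∀ i j j' : ℕ, (i, j) ∈ SkewCells β γ → (i, j') ∈ SkewCells β γ → j ≤ j' →
      F.entry (i, j) ≤ F.entry (i, j')) ∧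
  (∀ i i' j : ℕ, (i, j) ∈ SkewCells β γ → (i', j) ∈ SkewCells β γ → i < i' →
      F.entry (i, j) < F.entry (i', j)) ∧
  (∀ u c : ℕ, 2 ≤ u →
      Set.ncard {p ∈ SkewCells β γ | c ≤ p.2 ∧ F.entry p = u} ≤
      Set.ncard {p ∈ SkewCells β γ | c ≤ p.2 ∧ F.entry p = u - 1})

/-- Row `i` of the partition `γ⁽ᵘ⁾`: the boxes of `γ` together with the boxes of
`β∖γ` whose entry is at most `u`. -/
noncomputable def regionRow {α β γ : Partn} (F : SkFilling α β γ) (u i : ℕ) : ℕ :=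
  γ.f i + Set.ncard {j | (i, j) ∈ SkewCells β γ ∧ F.entry (i, j) ≤ u}

/-- Dominance order on fillings: `Z ≤_dom X` iff `δ⁽ᵘ⁾ ≤_dom γ⁽ᵘ⁾` for every `u`. -/
def DomLE {α β γ : Partn} (Z X : SkFilling α β γ) : Prop :=
  ∀ u j : ℕ, ∑ i ∈ Finset.range j, regionRow Z u i ≤ ∑ i ∈ Finset.range j, regionRow X u i

/-- A single sorting swap: exchange two out-of-order entries within a row
(left entry bigger) or within a column (upper entry bigger). -/
def SortSwap (β γ : Partn) (W Z : ℕ × ℕ → ℕ) : Prop :=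
  ∃ p q : ℕ × ℕ, p ∈ SkewCells β γ ∧ q ∈ SkewCells β γ ∧
    ((p.1 = q.1 ∧ p.2 < q.2) ∨ (p.2 = q.2 ∧ p.1 < q.1)) ∧
    W q < W p ∧
    Z = Function.update (Function.update W p (W q)) q (W p)

/-- `Z` is obtained from `X` by a decreasing box move: two entries of `X` are
exchanged so that the smaller entry is in the lower position after the exchange,
and then rows and columns are re-sorted if necessary. -/
def BoxMove {α β γ : Partn} (X Z : SkFilling α β γ) : Prop :=
  ∃ p q : ℕ × ℕ, p ∈ SkewCells β γ ∧ q ∈ SkewCells β γ ∧ p.1 < q.1 ∧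
    X.entry p < X.entry q ∧
    Relation.ReflTransGen (SortSwap β γ)
      (Function.update (Function.update X.entry p (X.entry q)) q (X.entry p)) Z.entry

/-- The box order on LR-fillings: generated by decreasing box moves. -/
def LeBox {α β γ : Partn} (Z X : SkFilling α β γ) : Prop :=
  Relation.ReflTransGen (fun Y W => IsLRF Y ∧ IsLRF W ∧ BoxMove W Y) Z X

/-! ### Reading words and standardization -/

/-- The block (paper entry, `1`-indexed) containing the `0`-indexed value `v`. -/
noncomputable def blockIdx (α : Partn) (v : ℕ) : ℕ := sInf {u | v < psum α u}

/-- `e` enumerates the boxes of the rook strip `β∖γ` from top right to bottom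
left, i.e. in increasing order of rows. -/
def IsRowRead (β γ : Partn) {n : ℕ} (e : Fin n → ℕ × ℕ) : Prop :=
  (∀ k, e k ∈ SkewCells β γ) ∧ Function.Injective e ∧
  (∀ c ∈ SkewCells β γ, ∃ k, e k = c) ∧
  ∀ k l : Fin n, k < l → (e k).1 < (e l).1

/-- `e` enumerates the boxes of `β∖γ` column by column from left to right, each
column read from bottom to top (the reading order of the word `ω`). -/
def IsColRead (β γ : Partn) {n : ℕ} (e : Fin n → ℕ × ℕ) : Prop :=
  (∀ k, e k ∈ SkewCells β γ) ∧ Function.Injective e ∧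
  (∀ c ∈ SkewCells β γ, ∃ k, e k = c) ∧
  ∀ k l : Fin n, k < l →
    (e k).2 < (e l).2 ∨ ((e k).2 = (e l).2 ∧ (e l).1 < (e k).1)

/-- `p` is the standardization `π(F)` of the reading word of the filling `F`
with respect to the reading enumeration `e`: position `k` receives a value in the
block corresponding to the entry of the `k`-th box, and equal entries receive
their values in reading order. -/
def IsStdOf (α : Partn) {β γ : Partn} {n : ℕ} (F : SkFilling α β γ)
    (e : Fin n → ℕ × ℕ) (p : Perm (Fin n)) : Prop :=
  (∀ k : Fin n, blockIdx α (p k) = F.entry (e k)) ∧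
  ∀ k l : Fin n, k < l → F.entry (e k) = F.entry (e l) → p k < p l

/-- The `α`-recording tableau of `x` is standard: the entries `x⁻¹(psum α u + j)`
increase along rows and down columns of the shape `α` (rows `0`-indexed). -/
def RecStd (α : Partn) {n : ℕ} (x : Perm (Fin n)) : Prop :=
  (∀ u j j' : ℕ, j < j' → j' < α.f u →
    ∀ (h : psum α u + j < n) (h' : psum α u + j' < n),
      x⁻¹ ⟨psum α u + j, h⟩ < x⁻¹ ⟨psum α u + j', h'⟩) ∧
  (∀ u u' j : ℕ, u < u' → j < α.f u' →
    ∀ (h : psum α u + j < n) (h' : psum α u' + j < n),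
      x⁻¹ ⟨psum α u + j, h⟩ < x⁻¹ ⟨psum α u' + j, h'⟩)

/-- Covering relation of the box order on LR-fillings. -/
def CovBox {α β γ : Partn} (X Y : SkFilling α β γ) : Prop :=
  IsLRF X ∧ IsLRF Y ∧ LeBox X Y ∧ X ≠ Y ∧
    ∀ W, IsLRF W → LeBox X W → LeBox W Y → W = X ∨ W = Y

/-- The decreasing block `(i, i-1, …, 1)`. -/
def descBlock (i : ℕ) : List ℕ := ((List.range i).reverse).map (· + 1)

/-! ### Auxiliary lemmas for Statement 8 -/

section Stmt8Aux

theorem Equiv.Perm.apply_inv_self {α : Type*} (f : Perm α) (a : α) : f (f⁻¹ a) = a :=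
  f.apply_symm_apply a

theorem Equiv.Perm.inv_apply_self {α : Type*} (f : Perm α) (a : α) : f⁻¹ (f a) = a :=
  f.symm_apply_apply a

lemma psum_mono (α : Partn) : Monotone (psum α) := fun _ _ hab =>
  Finset.sum_le_sum_of_subset (Finset.range_subset_range.2 hab)

lemma psum_succ (α : Partn) (b : ℕ) : psum α (b + 1) = psum α b + α.f b :=
  Finset.sum_range_succ _ _

lemma val_lt {α : Partn} {n : ℕ} (hn : PartnOf α n) {b j : ℕ} (hj : j < α.f b) :
    psum α b + j < n := by
  obtain ⟨N, hN0, hNs⟩ := hn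
  have hbN : b < N := by
    by_contra h
    have := hN0 b (le_of_not_gt h); omega
  have h1 : psum α (b + 1) ≤ psum α N := psum_mono α hbN
  have h2 : psum α N = n := hNs
  have h3 := psum_succ α b
  omega

lemma blockIdx_psum {α : Partn} {b j : ℕ} (hj : j < α.f b) :
    blockIdx α (psum α b + j) = b + 1 := by
  show sInf {u | psum α b + j < psum α u} = b + 1
  have hmem : b + 1 ∈ {u | psum α b + j < psum α u} := by
    have := psum_succ α b
    simp only [Set.mem_setOf_eq]
    omega
  refine le_antisymm (Nat.sInf_le hmem) ?_
  by_contra h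
  push_neg at h
  have h2 := Nat.sInf_mem (⟨b + 1, hmem⟩ : Set.Nonempty {u | psum α b + j < psum α u})
  have h3 : psum α (sInf {u | psum α b + j < psum α u}) ≤ psum α b :=
    psum_mono α (by omega)
  simp only [Set.mem_setOf_eq] at h2
  omega

lemma blockIdx_spec {α : Partn} {n v : ℕ} (hn : PartnOf α n) (hv : v < n) :
    ∃ b j, j < α.f b ∧ v = psum α b + j ∧ blockIdx α v = b + 1 := by
  obtain ⟨N, hN0, hNs⟩ := hn
  have hne : Set.Nonempty {u | v < psum α u} :=
    ⟨N, by simp only [Set.mem_setOf_eq, psum, hNs]; exact hv⟩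
  have hm := Nat.sInf_mem hne
  simp only [Set.mem_setOf_eq] at hm
  have hm0 : sInf {u | v < psum α u} ≠ 0 := by
    intro h
    rw [h] at hm
    simp [psum] at hm
  obtain ⟨b, hmb⟩ : ∃ b, sInf {u | v < psum α u} = b + 1 :=
    ⟨sInf {u | v < psum α u} - 1, by omega⟩
  rw [hmb] at hm
  have hb : b ∉ {u | v < psum α u} := Nat.notMem_of_lt_sInf (by omega)
  simp only [Set.mem_setOf_eq, not_lt] at hb
  have hs := psum_succ α b
  exact ⟨b, v - psum α b, by omega, by omega, hmb⟩

lemma cell_col {β γ : Partn} (hv : VertStrip β γ) {p : ℕ × ℕ}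
    (hp : p ∈ SkewCells β γ) : p.2 = γ.f p.1 := by
  have h1 := hv p.1
  have h2 : γ.f p.1 ≤ p.2 ∧ p.2 < β.f p.1 := hp
  omega

lemma col_lt_col {β γ : Partn} (hrook : RookStrip β γ) {p q : ℕ × ℕ}
    (hp : p ∈ SkewCells β γ) (hq : q ∈ SkewCells β γ) (hlt : p.1 < q.1) :
    q.2 < p.2 := by
  have hpc := cell_col hrook.1 hp
  have hqc := cell_col hrook.1 hq
  have hle : γ.f q.1 ≤ γ.f p.1 := γ.antitone' hlt.le
  rcases lt_or_eq_of_le hle with h | h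
  · omega
  · exfalso
    set c := γ.f q.1 with hc
    have h1 : ptranspose γ c ≤ p.1 := by
      have hsub : {i | c < γ.f i} ⊆ Set.Iio p.1 := by
        intro r hr
        simp only [Set.mem_setOf_eq] at hr
        by_contra hr'
        have : γ.f r ≤ γ.f p.1 := γ.antitone' (le_of_not_gt hr')
        omega
      calc ptranspose γ c ≤ Set.ncard (Set.Iio p.1) :=
            Set.ncard_le_ncard hsub (Set.finite_Iio _)
        _ = p.1 := by rw [← Finset.coe_Iio, Set.ncard_coe_finset, Nat.card_Iio]
    have h2 : q.1 + 1 ≤ ptranspose β c := by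
      have hcb : c < β.f q.1 := by
        have : q.2 < β.f q.1 := hq.2
        omega
      have hsub : Set.Iic q.1 ⊆ {i | c < β.f i} := by
        intro r hr
        simp only [Set.mem_Iic] at hr
        have : β.f q.1 ≤ β.f r := β.antitone' hr
        simp only [Set.mem_setOf_eq]
        omega
      have hfin : {i | c < β.f i}.Finite := by
        obtain ⟨N, hN⟩ := β.finite_supp
        refine Set.Finite.subset (Set.finite_Iio N) ?_
        intro r hr
        simp only [Set.mem_setOf_eq] at hr
        by_contra hr'
        have := hN r (le_of_not_gt hr')
        omega
      calc q.1 + 1 = Set.ncard (Set.Iic q.1) := by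
            rw [← Finset.coe_Iic, Set.ncard_coe_finset, Nat.card_Iic]
        _ ≤ ptranspose β c := Set.ncard_le_ncard hsub hfin
    have := hrook.2 c
    omega

open Finset in
lemma ncard_cells_eq {β γ : Partn} {n : ℕ} {e : Fin n → ℕ × ℕ}
    (h1 : ∀ k, e k ∈ SkewCells β γ) (h2 : Function.Injective e)
    (h3 : ∀ c ∈ SkewCells β γ, ∃ k, e k = c) (Q : ℕ × ℕ → Prop)
    [DecidablePred (fun k : Fin n => Q (e k))] :
    Set.ncard {p ∈ SkewCells β γ | Q p} =
      (Finset.univ.filter (fun k => Q (e k))).card := by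
  have him : {p ∈ SkewCells β γ | Q p} = e '' {k | Q (e k)} := by
    ext p
    constructor
    · rintro ⟨hp, hQ⟩
      obtain ⟨k, rfl⟩ := h3 p hp
      exact ⟨k, hQ, rfl⟩
    · rintro ⟨k, hk, rfl⟩
      exact ⟨h1 k, hk⟩
  rw [him, Set.ncard_image_of_injective _ h2]
  have hco : {k : Fin n | Q (e k)} = ↑(Finset.univ.filter (fun k => Q (e k))) := by
    ext k; simp
  rw [hco, Set.ncard_coe_finset]

end Stmt8Aux

/-- the filling of the rook strip corresponding to `x` via `π` is an
LR-filling iff the `α`-recording tableau of `x` is standard. -/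
theorem stmt8 (n : ℕ) (α β γ : Partn) (hsub : PartnSub γ β) (hrook : RookStrip β γ)
    (hn : PartnOf α n) (e : Fin n → ℕ × ℕ) (he : IsRowRead β γ e)
    (F : SkFilling α β γ) (x : Perm (Fin n)) (hx : IsStdOf α F e x) :
    IsLRF F ↔ RecStd α x := by
  classical
  obtain ⟨hecell, heinj, hesurj, herow⟩ := he
  obtain ⟨hx1, hx2⟩ := hx
  have ecol : ∀ k l : Fin n, k < l → (e l).2 < (e k).2 := fun k l h =>
    col_lt_col hrook (hecell k) (hecell l) (herow k l h)
  have ecol_le : ∀ k l : Fin n, k ≤ l → (e l).2 ≤ (e k).2 := by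
    intro k l h
    rcases eq_or_lt_of_le h with rfl | h
    · exact le_refl _
    · exact (ecol k l h).le
  have entry_inv : ∀ (b j : ℕ) (hj : j < α.f b) (h : psum α b + j < n),
      F.entry (e (x⁻¹ ⟨psum α b + j, h⟩)) = b + 1 := by
    intro b j hj h
    have h1 := hx1 (x⁻¹ ⟨psum α b + j, h⟩)
    rw [Perm.apply_inv_self] at h1
    rw [← h1]
    exact blockIdx_psum hj
  have inv_lt : ∀ (b j j' : ℕ) (hjj : j < j') (hj' : j' < α.f b)
      (h : psum α b + j < n) (h' : psum α b + j' < n),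
      x⁻¹ ⟨psum α b + j, h⟩ < x⁻¹ ⟨psum α b + j', h'⟩ := by
    intro b j j' hjj hj' h h'
    rcases lt_trichotomy (x⁻¹ ⟨psum α b + j, h⟩) (x⁻¹ ⟨psum α b + j', h'⟩) with hlt | heq | hgt
    · exact hlt
    · exfalso
      have := congrArg x heq
      rw [Perm.apply_inv_self, Perm.apply_inv_self] at this
      have h2 : psum α b + j = psum α b + j' := congrArg Fin.val this
      omega
    · exfalso
      have hent : F.entry (e (x⁻¹ ⟨psum α b + j', h'⟩)) =
          F.entry (e (x⁻¹ ⟨psum α b + j, h⟩)) := by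
        rw [entry_inv b j' hj' h', entry_inv b j (hjj.trans hj') h]
      have h3 := hx2 _ _ hgt hent
      rw [Perm.apply_inv_self, Perm.apply_inv_self] at h3
      have h4 : psum α b + j' < psum α b + j := h3
      omega
  have hnc : ∀ Q : ℕ × ℕ → Prop,
      Set.ncard {p ∈ SkewCells β γ | Q p} =
        (Finset.univ.filter (fun k => Q (e k))).card := fun Q =>
    ncard_cells_eq hecell heinj hesurj Q
  constructor
  · -- IsLRF → RecStd
    rintro ⟨-, -, hlat⟩
    have key : ∀ (b j : ℕ) (hj : j < α.f (b + 1)) (h : psum α b + j < n)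
        (h' : psum α (b + 1) + j < n),
        x⁻¹ ⟨psum α b + j, h⟩ < x⁻¹ ⟨psum α (b + 1) + j, h'⟩ := by
      intro b j hj h h'
      have hjb : j < α.f b := lt_of_lt_of_le hj (α.antitone' (Nat.le_succ b))
      set pos' : Fin n := x⁻¹ ⟨psum α (b + 1) + j, h'⟩ with hpos'
      set c : ℕ := (e pos').2 with hc
      have hlat2 := hlat (b + 2) c (by omega)
      have h21 : b + 2 - 1 = b + 1 := rfl
      rw [h21] at hlat2
      rw [hnc (fun p => c ≤ p.2 ∧ F.entry p = b + 2),
        hnc (fun p => c ≤ p.2 ∧ F.entry p = b + 1)] at hlat2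
      beta_reduce at hlat2
      have hlat3 : (Finset.univ.filter (fun k : Fin n => c ≤ (e k).2 ∧ F.entry (e k) = b + 2)).card ≤
          (Finset.univ.filter (fun k : Fin n => c ≤ (e k).2 ∧ F.entry (e k) = b + 1)).card := by
        convert hlat2 using 3 <;> exact Subsingleton.elim _ _
      -- first count is at least j + 1
      have hA : j + 1 ≤
          (Finset.univ.filter (fun k => c ≤ (e k).2 ∧ F.entry (e k) = b + 2)).card := by
        have hcard := Finset.card_le_card_of_injOn
          (fun i => x⁻¹ ⟨psum α (b + 1) + min i j,
            val_lt hn (lt_of_le_of_lt (min_le_right i j) hj)⟩)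
          (s := Finset.range (j + 1))
          (t := Finset.univ.filter (fun k => c ≤ (e k).2 ∧ F.entry (e k) = b + 2))
          ?_ ?_
        · simpa using hcard
        · intro i hi
          simp only [Finset.mem_coe, Finset.mem_filter, Finset.mem_univ, true_and]
          have hmin : min i j < α.f (b + 1) := lt_of_le_of_lt (min_le_right i j) hj
          have hle : x⁻¹ ⟨psum α (b + 1) + min i j, val_lt hn hmin⟩ ≤ pos' := by
            rcases lt_or_eq_of_le (min_le_right i j) with hlt | heqm
            · exact (inv_lt (b + 1) (min i j) j hlt hj _ h').le
            · rw [hpos']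
              refine le_of_eq (congrArg _ (Fin.ext ?_))
              show psum α (b + 1) + min i j = psum α (b + 1) + j
              omega
          refine ⟨?_, entry_inv (b + 1) (min i j) hmin _⟩
          exact le_trans (le_of_eq hc) (ecol_le _ _ hle)
        · intro i1 h1 i2 h2 heq
          simp only [Finset.coe_range, Set.mem_Iio] at h1 h2
          have := congrArg x heq
          rw [Perm.apply_inv_self, Perm.apply_inv_self] at this
          have hv : psum α (b + 1) + min i1 j = psum α (b + 1) + min i2 j :=
            congrArg Fin.val this
          omega
      -- second count is at most the card of the down-set I
      set I : Finset ℕ := (Finset.range (α.f b)).filter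
        (fun i => ∀ hh : psum α b + i < n, c ≤ (e (x⁻¹ ⟨psum α b + i, hh⟩)).2) with hI
      have hBI :
          (Finset.univ.filter (fun k => c ≤ (e k).2 ∧ F.entry (e k) = b + 1)).card ≤
            I.card := by
        apply Finset.card_le_card_of_injOn (fun k => ↑(x k) - psum α b)
        · intro k hk
          simp only [Finset.mem_coe, Finset.mem_filter, Finset.mem_univ, true_and] at hk
          obtain ⟨hck, hek⟩ := hk
          have hbi : blockIdx α ↑(x k) = b + 1 := (hx1 k).trans hek
          obtain ⟨b', j', hj', hval, hbi'⟩ := blockIdx_spec hn (x k).2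
          have hb' : b' = b := by omega
          rw [hb'] at hval hj'
          rw [hI]
          simp only [Finset.mem_coe, Finset.mem_filter, Finset.mem_range]
          refine ⟨by omega, ?_⟩
          intro hh
          have hxk : (⟨psum α b + (↑(x k) - psum α b), hh⟩ : Fin n) = x k :=
            Fin.ext (by simp only []; omega)
          rw [hxk, Perm.inv_apply_self]
          exact hck
        · intro k1 hk1 k2 hk2 heq
          simp only [Finset.coe_filter, Set.mem_setOf_eq, Finset.mem_univ,
            true_and] at hk1 hk2
          have hbi1 : blockIdx α ↑(x k1) = b + 1 := (hx1 k1).trans hk1.2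
          have hbi2 : blockIdx α ↑(x k2) = b + 1 := (hx1 k2).trans hk2.2
          obtain ⟨b1, j1, hj1, hval1, hbi1'⟩ := blockIdx_spec hn (x k1).2
          obtain ⟨b2, j2, hj2, hval2, hbi2'⟩ := blockIdx_spec hn (x k2).2
          have hb1 : b1 = b := by omega
          have hb2 : b2 = b := by omega
          rw [hb1] at hval1 hj1
          rw [hb2] at hval2 hj2
          beta_reduce at heq
          apply x.injective
          apply Fin.ext
          omega
      -- I is downward closed
      have hdc : ∀ i i' : ℕ, i ≤ i' → i' ∈ I → i ∈ I := by
        intro i i' hii hi'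
        rw [hI] at hi' ⊢
        simp only [Finset.mem_filter, Finset.mem_range] at hi' ⊢
        obtain ⟨hi'r, hi'p⟩ := hi'
        refine ⟨by omega, ?_⟩
        intro hh
        have hh' : psum α b + i' < n := val_lt hn hi'r
        have hle : x⁻¹ ⟨psum α b + i, hh⟩ ≤ x⁻¹ ⟨psum α b + i', hh'⟩ := by
          rcases lt_or_eq_of_le hii with hlt | rfl
          · exact (inv_lt b i i' hlt hi'r hh hh').le
          · exact le_refl _
        exact le_trans (hi'p hh') (ecol_le _ _ hle)
      have hjI : j ∈ I := by
        by_contra hjn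
        have hsub2 : I ⊆ Finset.range j := by
          intro i hi
          simp only [Finset.mem_range]
          by_contra hge
          exact hjn (hdc j i (le_of_not_gt hge) hi)
        have hcard := Finset.card_le_card hsub2
        rw [Finset.card_range] at hcard
        have h5 : j + 1 ≤ I.card := le_trans hA (le_trans hlat3 hBI)
        omega
      rw [hI] at hjI
      simp only [Finset.mem_filter, Finset.mem_range] at hjI
      have hcj : c ≤ (e (x⁻¹ ⟨psum α b + j, h⟩)).2 := hjI.2 h
      rcases lt_trichotomy (x⁻¹ ⟨psum α b + j, h⟩) pos' with hlt | heq2 | hgt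
      · exact hlt
      · exfalso
        have := congrArg x heq2
        rw [hpos', Perm.apply_inv_self, Perm.apply_inv_self] at this
        have hvv : psum α b + j = psum α (b + 1) + j := congrArg Fin.val this
        have := psum_succ α b
        omega
      · exfalso
        have := ecol pos' _ hgt
        omega
    refine ⟨fun u j j' hjj hj' h h' => inv_lt u j j' hjj hj' h h', ?_⟩
    have gen : ∀ u' u j : ℕ, u < u' → j < α.f u' →
        ∀ (h : psum α u + j < n) (h' : psum α u' + j < n),
        x⁻¹ ⟨psum α u + j, h⟩ < x⁻¹ ⟨psum α u' + j, h'⟩ := by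
      intro u'
      induction u' with
      | zero => intro u j hu; exact absurd hu (Nat.not_lt_zero u)
      | succ m ih =>
        intro u j hu hj h h'
        rcases Nat.lt_succ_iff_lt_or_eq.1 hu with hum | rfl
        · have hjm : j < α.f m := lt_of_lt_of_le hj (α.antitone' (Nat.le_succ m))
          have hm : psum α m + j < n := val_lt hn hjm
          exact lt_trans (ih u j hum hjm h hm) (key m j hj hm h')
        · exact key u j hj h h'
    exact fun u u' j hu hj h h' => gen u' u j hu hj h h'
  · -- RecStd → IsLRF
    rintro ⟨hrow, hcol⟩
    refine ⟨?_, ?_, ?_⟩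
    · intro i j j' hij hij' hjj
      have h1 : j = γ.f i := cell_col hrook.1 hij
      have h2 : j' = γ.f i := cell_col hrook.1 hij'
      have : j = j' := by omega
      subst this
      exact le_refl _
    · intro i i' j hij hi'j hii'
      exfalso
      have : j < j := col_lt_col hrook hij hi'j hii'
      omega
    · intro u c hu
      rw [hnc (fun p => c ≤ p.2 ∧ F.entry p = u),
        hnc (fun p => c ≤ p.2 ∧ F.entry p = u - 1)]
      set b : ℕ := u - 2 with hb
      have hub : u = b + 2 := by omega
      apply Finset.card_le_card_of_injOn
        (fun k => x⁻¹ ⟨↑(x k) - α.f b, lt_of_le_of_lt (Nat.sub_le _ _) (x k).2⟩)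
      · intro k hk
        simp only [Finset.mem_coe, Finset.mem_filter, Finset.mem_univ, true_and] at hk ⊢
        obtain ⟨hck, hek⟩ := hk
        have hbi : blockIdx α ↑(x k) = u := (hx1 k).trans hek
        obtain ⟨b', j', hj', hval, hbi'⟩ := blockIdx_spec hn (x k).2
        have hb' : b' = b + 1 := by omega
        subst hb'
        have hps := psum_succ α b
        have hj'b : j' < α.f b := lt_of_lt_of_le hj' (α.antitone' (Nat.le_succ b))
        have hfin : psum α b + j' < n := val_lt hn hj'b
        have haux : ∀ v : Fin n, (v : ℕ) = psum α b + j' →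
            c ≤ (e (x⁻¹ v)).2 ∧ F.entry (e (x⁻¹ v)) = u - 1 := by
          intro v hv
          have hveq : v = ⟨psum α b + j', hfin⟩ := Fin.ext hv
          subst hveq
          constructor
          · have hklt : x⁻¹ (⟨psum α b + j', hfin⟩ : Fin n) < k := by
              have hk' : x⁻¹ (⟨psum α (b + 1) + j', val_lt hn hj'⟩ : Fin n) = k := by
                rw [show (⟨psum α (b + 1) + j', val_lt hn hj'⟩ : Fin n) = x k from
                  Fin.ext hval.symm, Perm.inv_apply_self]
              rw [← hk']
              exact hcol b (b + 1) j' (Nat.lt_succ_self b) hj' hfin _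
            have := ecol _ _ hklt
            omega
          · rw [entry_inv b j' hj'b hfin]
            omega
        refine haux _ ?_
        show ↑(x k) - α.f b = psum α b + j'
        omega
      · intro k1 hk1 k2 hk2 heq
        simp only [Finset.coe_filter, Set.mem_setOf_eq, Finset.mem_univ,
          true_and] at hk1 hk2
        have hbi1 : blockIdx α ↑(x k1) = u := (hx1 k1).trans hk1.2
        have hbi2 : blockIdx α ↑(x k2) = u := (hx1 k2).trans hk2.2
        obtain ⟨b1, j1, hj1, hval1, hbi1'⟩ := blockIdx_spec hn (x k1).2
        obtain ⟨b2, j2, hj2, hval2, hbi2'⟩ := blockIdx_spec hn (x k2).2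
        have hb1 : b1 = b + 1 := by omega
        have hb2 : b2 = b + 1 := by omega
        subst hb1; subst hb2
        have hps := psum_succ α b
        have hvv : (↑(x k1) : ℕ) - α.f b = ↑(x k2) - α.f b :=
          congrArg Fin.val (x⁻¹.injective heq)
        apply x.injective
        apply Fin.ext
        omega
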